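/- Let $\mu\in(-\pi^2,\infty)$ and suppose $(f,g)$ with $f,g\in H^2\cap H^1_0(0,1)$, $(f,g)\neq(0,0)$, and $\beta\neq 0$ satisfy $f''+(\phi_\mu^2-\mu)f=\beta g$ and $g''+(3\phi_\mu^2-\mu)g=\beta f$ with Dirichlet boundary conditions. Then $\int_0^1 \phi_\mu(x)g(x)\,dx = 0$ and $\int_0^1 (x\phi_\mu)'(x) f(x)\,dx = \frac{\phi_\mu'(1)\,g'(1)}{\beta}$. -/

import Mathlib

open Set

/-- if `(f,g) ≠ (0,0)` solves the linearized eigenvalue system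
`f'' + (φ_μ² - μ) f = β g`, `g'' + (3φ_μ² - μ) g = β f` with Dirichlet conditions and
`β ≠ 0`, then `∫₀¹ φ_μ g = 0` and `∫₀¹ (xφ_μ)' f = φ_μ'(1) g'(1) / β`. -/
theorem stmt_14 (μ : ℝ) (hμ : -Real.pi ^ 2 < μ)
    (φ φ' φ'' : ℝ → ℝ)
    (hφd : ∀ x ∈ Set.Icc (0:ℝ) 1, HasDerivAt φ (φ' x) x ∧ HasDerivAt φ' (φ'' x) x)
    (hφeq : ∀ x ∈ Set.Icc (0:ℝ) 1, φ'' x + φ x ^ 3 = μ * φ x)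
    (hφpos : ∀ x ∈ Set.Ioo (0:ℝ) 1, 0 < φ x) (hφ0 : φ 0 = 0) (hφ1 : φ 1 = 0)
    (β : ℝ) (hβ : β ≠ 0)
    (f f' f'' g g' g'' : ℝ → ℝ)
    (hfd : ∀ x ∈ Set.Icc (0:ℝ) 1, HasDerivAt f (f' x) x ∧ HasDerivAt f' (f'' x) x)
    (hgd : ∀ x ∈ Set.Icc (0:ℝ) 1, HasDerivAt g (g' x) x ∧ HasDerivAt g' (g'' x) x)
    (hfeq : ∀ x ∈ Set.Icc (0:ℝ) 1, f'' x + (φ x ^ 2 - μ) * f x = β * g x)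
    (hgeq : ∀ x ∈ Set.Icc (0:ℝ) 1, g'' x + (3 * φ x ^ 2 - μ) * g x = β * f x)
    (hf0 : f 0 = 0) (hf1 : f 1 = 0) (hg0 : g 0 = 0) (hg1 : g 1 = 0)
    (hne : ∃ x ∈ Set.Icc (0:ℝ) 1, f x ≠ 0 ∨ g x ≠ 0) :
    (∫ x in (0:ℝ)..1, φ x * g x) = 0 ∧
    (∫ x in (0:ℝ)..1, (φ x + x * φ' x) * f x) = φ' 1 * g' 1 / β := by
  have h01 : (0:ℝ) ≤ 1 := by norm_num
  have huIcc : Set.uIcc (0:ℝ) 1 = Set.Icc 0 1 := Set.uIcc_of_le h01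
  -- continuity facts
  have hφc : ContinuousOn φ (Set.Icc 0 1) := fun x hx => ((hφd x hx).1).continuousAt.continuousWithinAt
  have hφ'c : ContinuousOn φ' (Set.Icc 0 1) := fun x hx => ((hφd x hx).2).continuousAt.continuousWithinAt
  have hφ''c : ContinuousOn φ'' (Set.Icc 0 1) := by
    have : ContinuousOn (fun x => μ * φ x - φ x ^ 3) (Set.Icc 0 1) :=
      (continuousOn_const.mul hφc).sub (hφc.pow 3)
    exact this.congr (fun x hx => by have := hφeq x hx; linarith)
  have hfc : ContinuousOn f (Set.Icc 0 1) := fun x hx => ((hfd x hx).1).continuousAt.continuousWithinAt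
  have hf'c : ContinuousOn f' (Set.Icc 0 1) := fun x hx => ((hfd x hx).2).continuousAt.continuousWithinAt
  have hgc : ContinuousOn g (Set.Icc 0 1) := fun x hx => ((hgd x hx).1).continuousAt.continuousWithinAt
  have hg'c : ContinuousOn g' (Set.Icc 0 1) := fun x hx => ((hgd x hx).2).continuousAt.continuousWithinAt
  -- Part 1
  have key1 : (∫ x in (0:ℝ)..1, β * (φ x * g x)) =
      (fun x => φ x * f' x - φ' x * f x) 1 - (fun x => φ x * f' x - φ' x * f x) 0 := by
    apply intervalIntegral.integral_eq_sub_of_hasDerivAt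
      (f := fun x => φ x * f' x - φ' x * f x) (f' := fun x => β * (φ x * g x))
    · intro x hx
      rw [huIcc] at hx
      have h1 := ((hφd x hx).1.mul (hfd x hx).2).sub ((hφd x hx).2.mul (hfd x hx).1)
      refine h1.congr_deriv ?_; symm
      linear_combination (f x) * (hφeq x hx) - (φ x) * (hfeq x hx)
    · apply ContinuousOn.intervalIntegrable
      rw [huIcc]
      exact continuousOn_const.mul (hφc.mul hgc)
  have int1 : (∫ x in (0:ℝ)..1, φ x * g x) = 0 := by
    have : β * (∫ x in (0:ℝ)..1, φ x * g x) = 0 := by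
      rw [← intervalIntegral.integral_const_mul, key1]; simp [hφ0, hφ1, hf0, hf1]
    rcases mul_eq_zero.mp this with h | h
    · exact absurd h hβ
    · exact h
  refine ⟨int1, ?_⟩
  -- Part 2
  set ψ : ℝ → ℝ := fun x => φ x + x * φ' x with hψdef
  set p : ℝ → ℝ := fun x => 2 * φ' x + x * φ'' x with hpdef
  have key2 : (∫ x in (0:ℝ)..1, (β * (ψ x * f x) - 2 * μ * (φ x * g x))) =
      (fun x => ψ x * g' x - p x * g x) 1 - (fun x => ψ x * g' x - p x * g x) 0 := by
    apply intervalIntegral.integral_eq_sub_of_hasDeriv_right_of_le h01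
      (f := fun x => ψ x * g' x - p x * g x) (f' := fun x => β * (ψ x * f x) - 2 * μ * (φ x * g x))
    · -- continuity of W₂
      exact ((hφc.add (continuousOn_id.mul hφ'c)).mul hg'c).sub
        ((continuousOn_const.mul hφ'c |>.add (continuousOn_id.mul hφ''c)).mul hgc)
    · intro x hx
      have hx' : x ∈ Set.Icc (0:ℝ) 1 := Set.Ioo_subset_Icc_self hx
      -- HasDerivAt φ'' at interior
      have hmem : Set.Icc (0:ℝ) 1 ∈ nhds x := Icc_mem_nhds hx.1 hx.2
      have hφ'''d : HasDerivAt φ'' (μ * φ' x - 3 * φ x ^ 2 * φ' x) x := by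
        have hbase : HasDerivAt (fun y => μ * φ y - φ y ^ 3) (μ * φ' x - 3 * φ x ^ 2 * φ' x) x := by
          have h1 := (hφd x hx').1
          have := (hasDerivAt_const x μ |>.mul h1).sub (h1.pow 3)
          refine this.congr_deriv ?_; symm
          push_cast; ring
        apply hbase.congr_of_eventuallyEq
        filter_upwards [hmem] with y hy
        have := hφeq y hy; linarith
      have hψd : HasDerivAt ψ (φ' x + (φ' x + x * φ'' x)) x := by
        have h2 := (hφd x hx').1.add ((hasDerivAt_id x).mul (hφd x hx').2)
        refine h2.congr_deriv ?_; symm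
        simp
      have hpd : HasDerivAt p (2 * φ'' x + (φ'' x + x * (μ * φ' x - 3 * φ x ^ 2 * φ' x))) x := by
        have h2 := ((hφd x hx').2.const_mul 2).add ((hasDerivAt_id x).mul hφ'''d)
        refine h2.congr_deriv ?_; symm
        simp
      have hW := (hψd.mul (hgd x hx').2).sub (hpd.mul (hgd x hx').1)
      have : HasDerivAt (fun y => ψ y * g' y - p y * g y)
          (β * (ψ x * f x) - 2 * μ * (φ x * g x)) x := by
        refine hW.congr_deriv ?_; symm
        simp only [hψdef, hpdef]
        linear_combination 3 * g x * (hφeq x hx') - (φ x + x * φ' x) * (hgeq x hx')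
      exact this.hasDerivWithinAt
    · apply ContinuousOn.intervalIntegrable
      rw [huIcc]
      exact (continuousOn_const.mul ((hφc.add (continuousOn_id.mul hφ'c)).mul hfc)).sub
        (continuousOn_const.mul (hφc.mul hgc))
  have hsplit : (∫ x in (0:ℝ)..1, (β * (ψ x * f x) - 2 * μ * (φ x * g x))) =
      β * (∫ x in (0:ℝ)..1, ψ x * f x) - 2 * μ * (∫ x in (0:ℝ)..1, φ x * g x) := by
    rw [intervalIntegral.integral_sub, intervalIntegral.integral_const_mul,
      intervalIntegral.integral_const_mul]
    · apply ContinuousOn.intervalIntegrable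
      rw [huIcc]
      exact continuousOn_const.mul ((hφc.add (continuousOn_id.mul hφ'c)).mul hfc)
    · apply ContinuousOn.intervalIntegrable
      rw [huIcc]
      exact continuousOn_const.mul (hφc.mul hgc)
  have : β * (∫ x in (0:ℝ)..1, ψ x * f x) = φ' 1 * g' 1 := by
    rw [hsplit, int1] at key2
    simp only [hψdef, hpdef] at key2
    rw [hφ0, hφ1, hg0, hg1] at key2
    linarith [key2]
  rw [hψdef] at this
  field_simp
  linarith [this]
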